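/- Let X be a finite nonempty set, let α > 1, and let p be a probability distribution on X. Then the supremum over all strictly positive probability distributions r on X of the expected power score ∑_{x∈X} p(x) · (α · r(x)^{α−1} + (1−α) · ∑_{x'∈X} r(x')^α) equals ∑_{x∈X} p(x)^α. -/

import Mathlib

open Real BigOperators Finset

lemma pow_score_young {α : ℝ} (hα : 1 < α) {p r : ℝ} (hp : 0 ≤ p) (hr : 0 ≤ r) :
    α * (p * r ^ (α - 1)) ≤ p ^ α + (α - 1) * r ^ α := by
  have hα0 : (0:ℝ) < α := by linarith
  have hα1 : (0:ℝ) < α - 1 := by linarith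
  have hconj : α.HolderConjugate (α / (α - 1)) := by
    exact (Real.holderConjugate_iff_eq_conjExponent hα).mpr rfl
  have hy := Real.young_inequality_of_nonneg hp (Real.rpow_nonneg hr (α - 1)) hconj
  have hrr : (r ^ (α - 1)) ^ (α / (α - 1)) = r ^ α := by
    rw [← Real.rpow_mul hr]
    congr 1
    field_simp
  rw [hrr] at hy
  have : p * r ^ (α - 1) ≤ p ^ α / α + r ^ α * (α - 1) / α := by
    calc p * r ^ (α - 1) ≤ p ^ α / α + r ^ α / (α / (α - 1)) := hy
    _ = p ^ α / α + r ^ α * (α - 1) / α := by rw [div_div_eq_mul_div]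
  calc α * (p * r ^ (α - 1)) ≤ α * (p ^ α / α + r ^ α * (α - 1) / α) := by
        exact mul_le_mul_of_nonneg_left this hα0.le
  _ = p ^ α + (α - 1) * r ^ α := by field_simp

lemma self_mul_rpow {α : ℝ} (hα : 1 < α) {p : ℝ} (hp : 0 ≤ p) :
    p * p ^ (α - 1) = p ^ α := by
  rcases eq_or_lt_of_le hp with h | h
  · rw [← h, Real.zero_rpow (by linarith), Real.zero_rpow (by linarith), mul_zero]
  · have hne : (1:ℝ) + (α - 1) ≠ 0 := by intro h'; linarith
    have := Real.rpow_one_add' hp hne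
    rw [show (1:ℝ) + (α - 1) = α by ring] at this
    rw [this]

/-- For `α > 1`, the supremum over strictly positive distributions `r` of the expected
power score equals `∑ x, p x ^ α`. -/
theorem power_score_sup
    {X : Type*} [Fintype X] [Nonempty X]
    (α : ℝ) (hα : 1 < α)
    (p : X → ℝ) (hp : ∀ x, 0 ≤ p x) (hp1 : (∑ x, p x) = 1) :
    sSup {v : ℝ | ∃ r : X → ℝ, (∀ x, 0 < r x) ∧ (∑ x, r x) = 1 ∧
        v = ∑ x, p x * (α * r x ^ (α - 1) + (1 - α) * ∑ x', r x' ^ α)}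
      = ∑ x, p x ^ α := by
  set c : ℝ := ∑ x, p x ^ α with hc
  set S := {v : ℝ | ∃ r : X → ℝ, (∀ x, 0 < r x) ∧ (∑ x, r x) = 1 ∧
        v = ∑ x, p x * (α * r x ^ (α - 1) + (1 - α) * ∑ x', r x' ^ α)}
  -- the score as a function of r
  have score_eq : ∀ r : X → ℝ,
      (∑ x, p x * (α * r x ^ (α - 1) + (1 - α) * ∑ x', r x' ^ α))
        = (∑ x, α * (p x * r x ^ (α - 1))) + (1 - α) * ∑ x', r x' ^ α := by
    intro r
    rw [Finset.sum_congr rfl (fun x _ => mul_add (p x) _ _), Finset.sum_add_distrib]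
    congr 1
    · exact Finset.sum_congr rfl (fun x _ => by ring)
    · rw [← Finset.sum_mul, hp1]; ring
  -- upper bound
  have hub : ∀ v ∈ S, v ≤ c := by
    rintro v ⟨r, hr, hr1, rfl⟩
    rw [score_eq]
    have : (∑ x, α * (p x * r x ^ (α - 1)))
        ≤ ∑ x, (p x ^ α + (α - 1) * r x ^ α) := by
      apply Finset.sum_le_sum
      intro x _
      exact pow_score_young hα (hp x) (hr x).le
    rw [Finset.sum_add_distrib] at this
    have h2 : (∑ x, (α - 1) * r x ^ α) = (α - 1) * ∑ x, r x ^ α := by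
      rw [Finset.mul_sum]
    rw [h2] at this
    linarith
  -- F(0) = c : the score at r = p itself
  have hF0 : (∑ x, p x * (α * p x ^ (α - 1) + (1 - α) * ∑ x', p x' ^ α)) = c := by
    rw [score_eq]
    have : (∑ x, α * (p x * p x ^ (α - 1))) = α * c := by
      rw [Finset.mul_sum]
      exact Finset.sum_congr rfl (fun x _ => by rw [self_mul_rpow hα (hp x)])
    rw [this]; ring
  -- nonempty
  have hne : S.Nonempty := by
    set n : ℝ := (Fintype.card X : ℝ)
    have hn : 0 < n := by
      simp only [n, Nat.cast_pos, Fintype.card_pos]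
    refine ⟨_, fun _ => 1/n, fun x => by positivity, ?_, rfl⟩
    simp only [Finset.sum_const, Finset.card_univ, nsmul_eq_mul]
    field_simp
    rfl
  refine csSup_eq_of_forall_le_of_forall_lt_exists_gt hne hub ?_
  intro w hw
  -- family r_t and continuity at t = 0
  set n : ℝ := (Fintype.card X : ℝ)
  have hn : 0 < n := by simp only [n, Nat.cast_pos, Fintype.card_pos]
  set r : ℝ → X → ℝ := fun t x => (p x + t) / (1 + t * n) with hrdef
  set F : ℝ → ℝ :=
    fun t => ∑ x, p x * (α * r t x ^ (α - 1) + (1 - α) * ∑ x', r t x' ^ α) with hFdef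
  have hr0 : ∀ x, r 0 x = p x := by intro x; simp [hrdef]
  have hcont : ∀ β : ℝ, 0 < β → ∀ x : X, ContinuousAt (fun t => r t x ^ β) 0 := by
    intro β hβ x
    have h1 : ContinuousAt (fun t => r t x) 0 := by
      apply ContinuousAt.div
      · fun_prop
      · fun_prop
      · simp
    exact (Real.continuousAt_rpow_const _ _ (Or.inr hβ.le)).comp h1
  have hFcont : ContinuousAt F 0 := by
    apply tendsto_finset_sum
    intro x _
    apply ContinuousAt.mul continuousAt_const
    apply ContinuousAt.add
    · exact ContinuousAt.mul continuousAt_const (hcont (α - 1) (by linarith) x)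
    · apply ContinuousAt.mul continuousAt_const
      apply tendsto_finset_sum
      intro x' _
      exact hcont α (by linarith) x'
  have hF0' : F 0 = c := by
    rw [hFdef]
    simp only [hr0]
    exact hF0
  -- eventually F t > w near 0
  have hev : ∀ᶠ t in nhds (0:ℝ), w < F t := by
    have : w < F 0 := by rw [hF0']; exact hw
    exact hFcont.eventually_const_lt this
  rw [Metric.eventually_nhds_iff] at hev
  obtain ⟨ε, hε, hball⟩ := hev
  -- pick t = min (ε/2) (1/(2n)) > 0 small
  set t : ℝ := min (ε/2) (1/(2*n)) with ht
  have ht0 : 0 < t := lt_min (by linarith) (by positivity)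
  have htε : |t - 0| < ε := by
    rw [sub_zero, abs_of_pos ht0]
    calc t ≤ ε/2 := min_le_left _ _
    _ < ε := by linarith
  have hden : 0 < 1 + t * n := by positivity
  refine ⟨F t, ⟨r t, ?_, ?_, rfl⟩, hball htε⟩
  · intro x
    apply div_pos _ hden
    have := hp x
    linarith
  · rw [hrdef]
    simp only
    rw [← Finset.sum_div, Finset.sum_add_distrib, hp1, Finset.sum_const,
      Finset.card_univ, nsmul_eq_mul]
    rw [div_eq_one_iff_eq hden.ne']
    ring
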